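/- Suppose the corner equation (E) holds for all k ∈ ℤ/Nℤ and the superposition formula (S1) holds for all k ∈ ℤ/Nℤ, and assume additionally that for all k one has μ·e^{x̃_k − x̂_k} ≠ λ and e^{x̂̃_k − x_{k+1}} ≠ λμ. Then the superposition formula (S2) and the corner equations (E1), (E2) and (E12) hold for all k ∈ ℤ/Nℤ. -/

import Mathlib

private lemma expMul (α β : ℝ) : Real.exp α * Real.exp β = Real.exp (α + β) :=
  (Real.exp_add α β).symm

private lemma expc (α β γ : ℝ) : Real.exp (α + β - γ) = Real.exp α * Real.exp β / Real.exp γ := by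
  rw [Real.exp_sub, Real.exp_add]

private lemma nd' (lam mu w u v : ℝ) (h : mu * Real.exp (u - v) ≠ lam) :
    mu * Real.exp (u - w) - lam * Real.exp (v - w) ≠ 0 := by
  intro h0
  apply h
  have hv := Real.exp_ne_zero (v - w)
  rw [show u - v = (u - w) - (v - w) by ring, Real.exp_sub, ← mul_div_assoc, div_eq_iff hv]
  linarith

private theorem F1B (lam mu A B P Q : ℝ) (hlam : lam ≠ 0) (hmu : mu ≠ 0)
    (hPA : P * A = Q * B)
    (hS1 : 1/lam*(P-1) - 1/mu*(Q-1) + lam*A - mu*B = 0) :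
    Q*(mu*B-lam*A) = A*(mu-lam) + lam*mu*A*(mu*B-lam*A) := by
  have h := hS1
  field_simp at h
  linear_combination A * h - mu * hPA

private theorem F1ab (lam mu a b A B Q : ℝ) (hA : A ≠ 0) (hBb : B*b = A*a)
    (hF1B : Q*(mu*B-lam*A) = A*(mu-lam) + lam*mu*A*(mu*B-lam*A)) :
    Q*(mu*a-lam*b) = b*(mu-lam) + lam*mu*A*(mu*a-lam*b) := by
  apply mul_left_cancel₀ hA
  linear_combination b*hF1B - (mu*Q - lam*mu^2*A)*hBb

private theorem F2 (lam mu a b A' B' a' b' : ℝ) (hlam : lam ≠ 0) (hmu : mu ≠ 0)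
    (hBb : B'*b' = A'*a')
    (hE : 1/lam*(a-1) + lam*A' = 1/mu*(b-1) + mu*B') :
    b'*((mu*a-lam*b)-(mu-lam)) = lam*mu*A'*(mu*a'-lam*b') := by
  have h := hE
  field_simp at h
  linear_combination b' * h + lam*mu^2 * hBb

private theorem lS2 (lam mu A B Q a b : ℝ) (hlam : lam ≠ 0) (hmu : mu ≠ 0) (hQ : Q ≠ 0)
    (hF1B : Q*(mu*B-lam*A) = A*(mu-lam) + lam*mu*A*(mu*B-lam*A))
    (hE : 1/lam*(a-1) + lam*A = 1/mu*(b-1) + mu*B) :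
    1/lam*(a-1) - 1/mu*(b-1) + lam*(b*A/Q) - mu*(a*A/Q) = 0 := by
  field_simp at hE ⊢
  linear_combination (Q - lam*mu*A) * hE + (lam*mu) * hF1B

private theorem lE12 (lam mu A B P Q a b : ℝ) (hlam : lam ≠ 0) (hmu : mu ≠ 0) (hQ : Q ≠ 0)
    (hF1B : Q*(mu*B-lam*A) = A*(mu-lam) + lam*mu*A*(mu*B-lam*A))
    (hE : 1/lam*(a-1) + lam*A = 1/mu*(b-1) + mu*B)
    (hS1 : 1/lam*(P-1) - 1/mu*(Q-1) + lam*A - mu*B = 0) :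
    1/lam*(P-1) + lam*(b*A/Q) = 1/mu*(Q-1) + mu*(a*A/Q) := by
  have h2 := lS2 lam mu A B Q a b hlam hmu hQ hF1B hE
  linear_combination h2 + hS1 - hE

private theorem lE1 (lam mu a b Q A a' b' Q' A' : ℝ) (hlam : lam ≠ 0) (hmu : mu ≠ 0)
    (hQ' : Q' ≠ 0) (hD : mu*a - lam*b ≠ 0) (hF : mu*a' - lam*b' ≠ 0)
    (hF1 : Q*(mu*a-lam*b) = b*(mu-lam) + lam*mu*A*(mu*a-lam*b))
    (hF2 : b'*((mu*a-lam*b)-(mu-lam)) = lam*mu*A'*(mu*a'-lam*b'))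
    (hF3 : Q'*(mu*a'-lam*b') = b'*(mu-lam) + lam*mu*A'*(mu*a'-lam*b')) :
    1/lam*(a-1) + lam*A = 1/mu*(Q-1) + mu*(a*A'/Q') := by
  field_simp
  apply mul_left_cancel₀ (mul_ne_zero hD hF)
  linear_combination (-(lam*b'*(mu*a-lam*b))) * hF1
    + (mu*a*(mu*a-lam*b) - (mu*a-lam*b)*(mu*(a-1)+lam^2*mu*A-lam*Q+lam)) * hF2
    + ((mu*a-lam*b)*(mu*(a-1)+lam^2*mu*A-lam*Q+lam)) * hF3

/-- For the Toda lattice with periodic boundary conditions, corner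
equation (E) together with superposition formula (S1) (plus nondegeneracy)
imply (S2), (E1), (E2) and (E12). -/
theorem toda_superposition
    (N : ℕ) [NeZero N] (x xt xh xth : ZMod N → ℝ) (lam mu : ℝ)
    (hlam : lam ≠ 0) (hmu : mu ≠ 0) (hlm : lam ≠ mu)
    (hE : ∀ k : ZMod N,
      (1 / lam) * (Real.exp (xt k - x k) - 1) + lam * Real.exp (x k - xt (k - 1)) =
      (1 / mu) * (Real.exp (xh k - x k) - 1) + mu * Real.exp (x k - xh (k - 1)))
    (hS1 : ∀ k : ZMod N,
      (1 / lam) * (Real.exp (xth k - xh k) - 1) - (1 / mu) * (Real.exp (xth k - xt k) - 1)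
        + lam * Real.exp (x (k + 1) - xt k) - mu * Real.exp (x (k + 1) - xh k) = 0)
    (hnd1 : ∀ k : ZMod N, mu * Real.exp (xt k - xh k) ≠ lam)
    (hnd2 : ∀ k : ZMod N, Real.exp (xth k - x (k + 1)) ≠ lam * mu) :
    (∀ k : ZMod N,
      (1 / lam) * (Real.exp (xt (k + 1) - x (k + 1)) - 1)
        - (1 / mu) * (Real.exp (xh (k + 1) - x (k + 1)) - 1)
        + lam * Real.exp (xh (k + 1) - xth k) - mu * Real.exp (xt (k + 1) - xth k) = 0) ∧
    (∀ k : ZMod N,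
      (1 / lam) * (Real.exp (xt k - x k) - 1) + lam * Real.exp (x (k + 1) - xt k) =
      (1 / mu) * (Real.exp (xth k - xt k) - 1) + mu * Real.exp (xt k - xth (k - 1))) ∧
    (∀ k : ZMod N,
      (1 / mu) * (Real.exp (xh k - x k) - 1) + mu * Real.exp (x (k + 1) - xh k) =
      (1 / lam) * (Real.exp (xth k - xh k) - 1) + lam * Real.exp (xh k - xth (k - 1))) ∧
    (∀ k : ZMod N,
      (1 / lam) * (Real.exp (xth k - xh k) - 1) + lam * Real.exp (xh (k + 1) - xth k) =
      (1 / mu) * (Real.exp (xth k - xt k) - 1) + mu * Real.exp (xt (k + 1) - xth k)) := by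
  -- per-site abbreviations and exponential identities
  have hPA : ∀ k : ZMod N,
      Real.exp (xth k - xh k) * Real.exp (x (k+1) - xt k)
        = Real.exp (xth k - xt k) * Real.exp (x (k+1) - xh k) := by
    intro k; rw [expMul, expMul]; congr 1; ring
  have hBb : ∀ k : ZMod N,
      Real.exp (x (k+1) - xh k) * Real.exp (xh k - x k)
        = Real.exp (x (k+1) - xt k) * Real.exp (xt k - x k) := by
    intro k; rw [expMul, expMul]; congr 1; ring
  have hBb' : ∀ k : ZMod N,
      Real.exp (x k - xh (k-1)) * Real.exp (xh (k-1) - x (k-1))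
        = Real.exp (x k - xt (k-1)) * Real.exp (xt (k-1) - x (k-1)) := by
    intro k; rw [expMul, expMul]; congr 1; ring
  -- nondegeneracy in "a,b" variables
  have hD : ∀ k : ZMod N,
      mu * Real.exp (xt k - x k) - lam * Real.exp (xh k - x k) ≠ 0 := fun k =>
    nd' lam mu (x k) (xt k) (xh k) (hnd1 k)
  have hD2 : ∀ k : ZMod N,
      lam * Real.exp (xh k - x k) - mu * Real.exp (xt k - x k) ≠ 0 := by
    intro k h; exact hD k (by linarith)
  -- F1B at each site
  have hF1B : ∀ k : ZMod N,
      Real.exp (xth k - xt k) * (mu * Real.exp (x (k+1) - xh k) - lam * Real.exp (x (k+1) - xt k))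
        = Real.exp (x (k+1) - xt k) * (mu - lam)
          + lam * mu * Real.exp (x (k+1) - xt k)
            * (mu * Real.exp (x (k+1) - xh k) - lam * Real.exp (x (k+1) - xt k)) := fun k =>
    F1B lam mu _ _ _ _ hlam hmu (hPA k) (hS1 k)
  -- swapped F1B
  have hF1Bs : ∀ k : ZMod N,
      Real.exp (xth k - xh k) * (lam * Real.exp (x (k+1) - xt k) - mu * Real.exp (x (k+1) - xh k))
        = Real.exp (x (k+1) - xh k) * (lam - mu)
          + mu * lam * Real.exp (x (k+1) - xh k)
            * (lam * Real.exp (x (k+1) - xt k) - mu * Real.exp (x (k+1) - xh k)) := fun k =>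
    F1B mu lam _ _ _ _ hmu hlam (hPA k).symm (by linear_combination -(hS1 k))
  -- F1 in a,b variables
  have hF1 : ∀ k : ZMod N,
      Real.exp (xth k - xt k) * (mu * Real.exp (xt k - x k) - lam * Real.exp (xh k - x k))
        = Real.exp (xh k - x k) * (mu - lam)
          + lam * mu * Real.exp (x (k+1) - xt k)
            * (mu * Real.exp (xt k - x k) - lam * Real.exp (xh k - x k)) := fun k =>
    F1ab lam mu _ _ _ _ _ (Real.exp_ne_zero _) (hBb k) (hF1B k)
  have hF1s : ∀ k : ZMod N,
      Real.exp (xth k - xh k) * (lam * Real.exp (xh k - x k) - mu * Real.exp (xt k - x k))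
        = Real.exp (xt k - x k) * (lam - mu)
          + mu * lam * Real.exp (x (k+1) - xh k)
            * (lam * Real.exp (xh k - x k) - mu * Real.exp (xt k - x k)) := fun k =>
    F1ab mu lam _ _ _ _ _ (Real.exp_ne_zero _) (hBb k).symm (hF1Bs k)
  -- F2
  have hF2 : ∀ k : ZMod N,
      Real.exp (xh (k-1) - x (k-1))
          * ((mu * Real.exp (xt k - x k) - lam * Real.exp (xh k - x k)) - (mu - lam))
        = lam * mu * Real.exp (x k - xt (k-1))
            * (mu * Real.exp (xt (k-1) - x (k-1)) - lam * Real.exp (xh (k-1) - x (k-1))) := fun k =>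
    F2 lam mu _ _ _ _ _ _ hlam hmu (hBb' k) (hE k)
  have hF2s : ∀ k : ZMod N,
      Real.exp (xt (k-1) - x (k-1))
          * ((lam * Real.exp (xh k - x k) - mu * Real.exp (xt k - x k)) - (lam - mu))
        = mu * lam * Real.exp (x k - xh (k-1))
            * (lam * Real.exp (xh (k-1) - x (k-1)) - mu * Real.exp (xt (k-1) - x (k-1))) := fun k =>
    F2 mu lam _ _ _ _ _ _ hmu hlam (hBb' k).symm (hE k).symm
  -- hF1 at k-1 with index simplification
  have hF3 : ∀ k : ZMod N,
      Real.exp (xth (k-1) - xt (k-1))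
          * (mu * Real.exp (xt (k-1) - x (k-1)) - lam * Real.exp (xh (k-1) - x (k-1)))
        = Real.exp (xh (k-1) - x (k-1)) * (mu - lam)
          + lam * mu * Real.exp (x k - xt (k-1))
            * (mu * Real.exp (xt (k-1) - x (k-1)) - lam * Real.exp (xh (k-1) - x (k-1))) := by
    intro k
    have h := hF1 (k-1)
    rwa [sub_add_cancel] at h
  have hF3s : ∀ k : ZMod N,
      Real.exp (xth (k-1) - xh (k-1))
          * (lam * Real.exp (xh (k-1) - x (k-1)) - mu * Real.exp (xt (k-1) - x (k-1)))
        = Real.exp (xt (k-1) - x (k-1)) * (lam - mu)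
          + mu * lam * Real.exp (x k - xh (k-1))
            * (lam * Real.exp (xh (k-1) - x (k-1)) - mu * Real.exp (xt (k-1) - x (k-1))) := by
    intro k
    have h := hF1s (k-1)
    rwa [sub_add_cancel] at h
  -- E at k+1 with index simplification
  have hE1 : ∀ k : ZMod N,
      1/lam * (Real.exp (xt (k+1) - x (k+1)) - 1) + lam * Real.exp (x (k+1) - xt k)
        = 1/mu * (Real.exp (xh (k+1) - x (k+1)) - 1) + mu * Real.exp (x (k+1) - xh k) := by
    intro k
    have h := hE (k+1)
    rwa [add_sub_cancel_right] at h
  refine ⟨?_, ?_, ?_, ?_⟩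
  · -- (S2)
    intro k
    rw [show xh (k+1) - xth k
        = (xh (k+1) - x (k+1)) + (x (k+1) - xt k) - (xth k - xt k) by ring, expc,
      show xt (k+1) - xth k
        = (xt (k+1) - x (k+1)) + (x (k+1) - xt k) - (xth k - xt k) by ring, expc]
    exact lS2 lam mu _ _ _ _ _ hlam hmu (Real.exp_ne_zero _) (hF1B k) (hE1 k)
  · -- (E1)
    intro k
    rw [show xt k - xth (k-1)
        = (xt k - x k) + (x k - xt (k-1)) - (xth (k-1) - xt (k-1)) by ring, expc]
    exact lE1 lam mu _ _ _ _ _ _ _ _ hlam hmu (Real.exp_ne_zero _)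
      (hD k) (hD (k-1)) (hF1 k) (hF2 k) (hF3 k)
  · -- (E2)
    intro k
    rw [show xh k - xth (k-1)
        = (xh k - x k) + (x k - xh (k-1)) - (xth (k-1) - xh (k-1)) by ring, expc]
    exact lE1 mu lam _ _ _ _ _ _ _ _ hmu hlam (Real.exp_ne_zero _)
      (hD2 k) (hD2 (k-1)) (hF1s k) (hF2s k) (hF3s k)
  · -- (E12)
    intro k
    rw [show xh (k+1) - xth k
        = (xh (k+1) - x (k+1)) + (x (k+1) - xt k) - (xth k - xt k) by ring, expc,
      show xt (k+1) - xth k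
        = (xt (k+1) - x (k+1)) + (x (k+1) - xt k) - (xth k - xt k) by ring, expc]
    exact lE12 lam mu _ _ _ _ _ _ hlam hmu (Real.exp_ne_zero _) (hF1B k) (hE1 k) (hS1 k)
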